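/- A d-closure Γ on vertex set [n] is d-chordal if and only if Γ is d-collapsible. -/

import Mathlib

namespace ChordalPaper

/-- A simplicial complex on vertex set `Fin n`: a family of finsets closed under subsets. -/
def IsComplex {n : ℕ} (Γ : Set (Finset (Fin n))) : Prop :=
  ∀ F ∈ Γ, ∀ F' ⊆ F, F' ∈ Γ

/-- The `d`-closure `Δ_d(Γ)`: all subsets of size `≤ d`, together with all subsets
all of whose `(d+1)`-element subsets are faces of `Γ`. -/
def dClosure {n : ℕ} (d : ℕ) (Γ : Set (Finset (Fin n))) : Set (Finset (Fin n)) :=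
  {F | F.card ≤ d ∨ ∀ G ⊆ F, G.card = d + 1 → G ∈ Γ}

/-- The pure `(d-1)`-skeleton `⟨[n]⟩^{[d-1]}` of the full simplex: all subsets of size `≤ d`. -/
def fullSkel (n d : ℕ) : Set (Finset (Fin n)) := {F | F.card ≤ d}

/-- A facet: a maximal face. -/
def IsFacet {n : ℕ} (Γ : Set (Finset (Fin n))) (F : Finset (Fin n)) : Prop :=
  F ∈ Γ ∧ ∀ G ∈ Γ, F ⊆ G → G = F

/-- A free face: a face contained in a unique facet. -/
def IsFreeFace {n : ℕ} (Γ : Set (Finset (Fin n))) (E : Finset (Fin n)) : Prop :=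
  E ∈ Γ ∧ ∃! F, IsFacet Γ F ∧ E ⊆ F

/-- Collapse at `E`: remove all faces containing `E` (including `E` itself). -/
def collapseFace {n : ℕ} (Γ : Set (Finset (Fin n))) (E : Finset (Fin n)) :
    Set (Finset (Fin n)) := {F ∈ Γ | ¬ E ⊆ F}

/-- Successive collapses along a list of faces. -/
def collapseList {n : ℕ} (Γ : Set (Finset (Fin n))) :
    List (Finset (Fin n)) → Set (Finset (Fin n))
  | [] => Γ
  | E :: L => collapseList (collapseFace Γ E) L

/-- A free sequence: each face is free in the complex obtained by collapsing the previous ones. -/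
def IsFreeSeq {n : ℕ} (Γ : Set (Finset (Fin n))) : List (Finset (Fin n)) → Prop
  | [] => True
  | E :: L => IsFreeFace Γ E ∧ IsFreeSeq (collapseFace Γ E) L

/-- `d`-collapsibility: a sequence of elementary `d`-collapsings (at free faces of
dimension `< d`, i.e. cardinality `≤ d`) reduces `Γ` to the void complex. -/
def Collapsible {n : ℕ} (d : ℕ) (Γ : Set (Finset (Fin n))) : Prop :=
  ∃ L : List (Finset (Fin n)),
    IsFreeSeq Γ L ∧ (∀ E ∈ L, E.card ≤ d) ∧ collapseList Γ L = ∅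

/-- Simplicial deletion `Γ∖E`: remove all faces strictly containing `E` (keeping `E`). -/
def srDel {n : ℕ} (Γ : Set (Finset (Fin n))) (E : Finset (Fin n)) :
    Set (Finset (Fin n)) := {F ∈ Γ | ¬ E ⊂ F}

/-- Successive simplicial deletions along a list of faces. -/
def srDelList {n : ℕ} (Γ : Set (Finset (Fin n))) :
    List (Finset (Fin n)) → Set (Finset (Fin n))
  | [] => Γ
  | E :: L => srDelList (srDel Γ E) L

/-- A simplicial order for a `d`-closure on `Fin n`: a sequence of non-facet free faces of
cardinality `d` whose successive simplicial deletions reduce the complex to the pure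
`(d-1)`-skeleton of the full simplex. -/
def IsSimpOrder {n : ℕ} (d : ℕ) (Γ : Set (Finset (Fin n))) :
    List (Finset (Fin n)) → Prop
  | [] => Γ = fullSkel n d
  | E :: L => E.card = d ∧ IsFreeFace Γ E ∧ ¬ IsFacet Γ E ∧ IsSimpOrder d (srDel Γ E) L

/-- `Γ` is `d`-chordal: its `d`-closure equals the pure `(d-1)`-skeleton of the full
simplex or admits a simplicial order. -/
def DChordal {n : ℕ} (d : ℕ) (Γ : Set (Finset (Fin n))) : Prop :=
  ∃ L, IsSimpOrder d (dClosure d Γ) L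

/-- A minimal nonface of `Γ`. -/
def IsMinNonface {n : ℕ} (Γ : Set (Finset (Fin n))) (F : Finset (Fin n)) : Prop :=
  F ∉ Γ ∧ ∀ G ⊂ F, G ∈ Γ

end ChordalPaper


namespace ChordalAux
open ChordalPaper

variable {n : ℕ}

lemma exists_facet (Δ : Set (Finset (Fin n))) {F : Finset (Fin n)} (hF : F ∈ Δ) :
    ∃ G, F ⊆ G ∧ IsFacet Δ G := by
  obtain ⟨G, ⟨hGΔ, hFG⟩, hmax⟩ :=
    Set.Finite.exists_maximalFor Finset.card {G | G ∈ Δ ∧ F ⊆ G} (Set.toFinite _)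
      ⟨F, hF, subset_rfl⟩
  refine ⟨G, hFG, hGΔ, fun H hH hGH => ?_⟩
  exact (Finset.eq_of_subset_of_card_le hGH
    (hmax ⟨hH, hFG.trans hGH⟩ (Finset.card_le_card hGH))).symm

lemma collapseList_append (Γ : Set (Finset (Fin n))) (L₁ L₂ : List (Finset (Fin n))) :
    collapseList Γ (L₁ ++ L₂) = collapseList (collapseList Γ L₁) L₂ := by
  induction L₁ generalizing Γ with
  | nil => rfl
  | cons E L ih => simp only [List.cons_append, collapseList]; exact ih _

lemma freeSeq_append {Γ : Set (Finset (Fin n))} {L₁ L₂ : List (Finset (Fin n))}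
    (h1 : IsFreeSeq Γ L₁) (h2 : IsFreeSeq (collapseList Γ L₁) L₂) :
    IsFreeSeq Γ (L₁ ++ L₂) := by
  induction L₁ generalizing Γ with
  | nil => exact h2
  | cons E L ih => exact ⟨h1.1, ih h1.2 h2⟩

lemma srDelList_append (Γ : Set (Finset (Fin n))) (L₁ L₂ : List (Finset (Fin n))) :
    srDelList Γ (L₁ ++ L₂) = srDelList (srDelList Γ L₁) L₂ := by
  induction L₁ generalizing Γ with
  | nil => rfl
  | cons E L ih => simp only [List.cons_append, srDelList]; exact ih _

/-- steps of a simplicial order without the final condition -/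
def Steps {n : ℕ} (d : ℕ) (Γ : Set (Finset (Fin n))) : List (Finset (Fin n)) → Prop
  | [] => True
  | E :: L => E.card = d ∧ IsFreeFace Γ E ∧ ¬ IsFacet Γ E ∧ Steps d (srDel Γ E) L

lemma steps_append {d : ℕ} {Γ : Set (Finset (Fin n))} {L₁ L₂ : List (Finset (Fin n))}
    (h1 : Steps d Γ L₁) (h2 : IsSimpOrder d (srDelList Γ L₁) L₂) :
    IsSimpOrder d Γ (L₁ ++ L₂) := by
  induction L₁ generalizing Γ with
  | nil => exact h2
  | cons E L ih => exact ⟨h1.1, h1.2.1, h1.2.2.1, ih h1.2.2.2 h2⟩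

lemma steps_append' {d : ℕ} {Γ : Set (Finset (Fin n))} {L₁ L₂ : List (Finset (Fin n))}
    (h1 : Steps d Γ L₁) (h2 : Steps d (srDelList Γ L₁) L₂) :
    Steps d Γ (L₁ ++ L₂) := by
  induction L₁ generalizing Γ with
  | nil => exact h2
  | cons E L ih => exact ⟨h1.1, h1.2.1, h1.2.2.1, ih h1.2.2.2 h2⟩

lemma isComplex_of_closure {d : ℕ} {Γ : Set (Finset (Fin n))} (hclo : Γ = dClosure d Γ) :
    IsComplex Γ := by
  intro F hF F' hsub
  rw [hclo] at hF ⊢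
  rcases hF with h | h
  · exact Or.inl (le_trans (Finset.card_le_card hsub) h)
  · exact Or.inr fun G hG hGc => h G (hG.trans hsub) hGc

lemma skel_mem {d : ℕ} {Γ : Set (Finset (Fin n))} (hclo : Γ = dClosure d Γ)
    {X : Finset (Fin n)} (hX : X.card ≤ d) : X ∈ Γ := by
  rw [hclo]; exact Or.inl hX

lemma isComplex_srDel {Γ : Set (Finset (Fin n))} (hΓ : IsComplex Γ) (E : Finset (Fin n)) :
    IsComplex (srDel Γ E) := by
  intro F hF F' hsub
  exact ⟨hΓ F hF.1 F' hsub, fun hss => hF.2 (lt_of_lt_of_le hss hsub)⟩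

end ChordalAux

namespace ChordalAux
open ChordalPaper
variable {n : ℕ}

lemma peelTop (d : ℕ) :
    ∀ (N : ℕ) (Δ U : Set (Finset (Fin n))), U.ncard ≤ N → U ⊆ Δ →
      (∀ G ∈ U, G.card ≤ d) → (∀ G ∈ U, ∀ H ∈ Δ, G ⊆ H → H ∈ U) →
      ∃ L, IsFreeSeq Δ L ∧ (∀ E ∈ L, E.card ≤ d) ∧ collapseList Δ L = Δ \ U := by
  intro N
  induction N with
  | zero =>
    intro Δ U hcard _ _ _
    have hU : U = ∅ := (Set.ncard_eq_zero (Set.toFinite U)).mp (Nat.le_zero.mp hcard)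
    exact ⟨[], trivial, by simp, by simp [collapseList, hU]⟩
  | succ N ih =>
    intro Δ U hcard hUΔ hsmall hup
    rcases Set.eq_empty_or_nonempty U with hU | hU
    · exact ⟨[], trivial, by simp, by simp [collapseList, hU]⟩
    · obtain ⟨G, hGU, hmax⟩ :=
        Set.Finite.exists_maximalFor Finset.card U (Set.toFinite _) hU
      have hGΔ : G ∈ Δ := hUΔ hGU
      have hGfacet : IsFacet Δ G := by
        refine ⟨hGΔ, fun H hH hGH => ?_⟩
        have hHU : H ∈ U := hup G hGU H hH hGH
        exact (Finset.eq_of_subset_of_card_le hGH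
          (hmax hHU (Finset.card_le_card hGH))).symm
      have hfree : IsFreeFace Δ G := by
        refine ⟨hGΔ, G, ⟨hGfacet, subset_rfl⟩, fun F hF => ?_⟩
        have hFU : F ∈ U := hup G hGU F hF.1.1 hF.2
        exact (Finset.eq_of_subset_of_card_le hF.2
          (hmax hFU (Finset.card_le_card hF.2))).symm
      have hcoll : collapseFace Δ G = Δ \ {G} := by
        ext H
        simp only [collapseFace, Set.mem_sep_iff, Set.mem_diff, Set.mem_singleton_iff]
        constructor
        · rintro ⟨hH, hns⟩
          exact ⟨hH, fun h => hns (h ▸ subset_rfl)⟩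
        · rintro ⟨hH, hne⟩
          refine ⟨hH, fun hsub => hne ?_⟩
          have : H ∈ U := hup G hGU H hH hsub
          exact ((Finset.eq_of_subset_of_card_le hsub
            (hmax this (Finset.card_le_card hsub))).symm)
      have hUsub : U \ {G} ⊆ Δ \ {G} := fun X hX => ⟨hUΔ hX.1, hX.2⟩
      have hncard : (U \ {G}).ncard ≤ N := by
        have h1 : (U \ {G}) ⊂ U := by
          constructor
          · exact Set.diff_subset
          · intro hsub
            exact (hsub hGU).2 rfl
        have := Set.ncard_lt_ncard h1 (Set.toFinite U)
        omega
      obtain ⟨L, hLfree, hLcard, hLend⟩ := ih (Δ \ {G}) (U \ {G}) hncard hUsub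
        (fun X hX => hsmall X hX.1)
        (fun X hX H hH hXH => ⟨hup X hX.1 H hH.1 hXH, hH.2⟩)
      refine ⟨G :: L, ⟨hfree, by rw [hcoll]; exact hLfree⟩,
        fun E hE => ?_, ?_⟩
      · rcases List.mem_cons.mp hE with hE | hE
        · exact hE ▸ hsmall G hGU
        · exact hLcard E hE
      · show collapseList (collapseFace Δ G) L = Δ \ U
        rw [hcoll, hLend]
        ext X
        simp only [Set.mem_diff, Set.mem_singleton_iff]
        constructor
        · rintro ⟨⟨h1, h2⟩, h3⟩
          exact ⟨h1, fun hX => h3 ⟨hX, h2⟩⟩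
        · rintro ⟨h1, h2⟩
          have hne : X ≠ G := fun h => h2 (h ▸ hGU)
          exact ⟨⟨h1, hne⟩, fun hX => h2 hX.1⟩
      
end ChordalAux

namespace ChordalAux
open ChordalPaper
variable {n : ℕ}

lemma simpOrder_card {d : ℕ} :
    ∀ (M : List (Finset (Fin n))) (Γ : Set (Finset (Fin n))),
      IsSimpOrder d Γ M → ∀ E ∈ M, E.card = d := by
  intro M
  induction M with
  | nil => intro Γ _ E hE; exact absurd hE (List.not_mem_nil)
  | cons X M ih =>
    intro Γ hord E hE
    rcases List.mem_cons.mp hE with h | h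
    · exact h ▸ hord.1
    · exact ih _ hord.2.2.2 E h

lemma simpOrder_freeSeq {d : ℕ} :
    ∀ (M : List (Finset (Fin n))) (Γ S : Set (Finset (Fin n))),
      IsComplex Γ → IsSimpOrder d Γ M →
      (∀ X ∈ S, X.card = d ∧ IsFacet Γ X) →
      IsFreeSeq (Γ \ S) M ∧
        collapseList (Γ \ S) M = fullSkel n d \ (S ∪ {E | E ∈ M}) := by
  intro M
  induction M with
  | nil =>
    intro Γ S _ hord _
    refine ⟨trivial, ?_⟩
    show Γ \ S = _
    rw [show Γ = fullSkel n d from hord]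
    congr 1
    simp
  | cons E M ih =>
    intro Γ S hΓ hord hS
    obtain ⟨hEd, ⟨hEΓ, F, ⟨hFfacet, hEF⟩, hFuniq⟩, hEnotfacet, hord'⟩ := hord
    have hEnotS : E ∉ S := fun h => hEnotfacet (hS E h).2
    have hFne : F ≠ E := fun h => hEnotfacet (h ▸ hFfacet)
    have hEssF : E ⊂ F := HasSubset.Subset.ssubset_of_ne hEF (Ne.symm hFne)
    have hFbig : d < F.card := hEd ▸ Finset.card_lt_card hEssF
    have hFnotS : F ∉ S := fun h => by have := (hS F h).1; omega
    -- E is a free face of Γ \ S with facet F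
    have hfree : IsFreeFace (Γ \ S) E := by
      refine ⟨⟨hEΓ, hEnotS⟩, F, ⟨⟨⟨hFfacet.1, hFnotS⟩, fun H hH hFH => hFfacet.2 H hH.1 hFH⟩, hEF⟩,
        ?_⟩
      rintro F' ⟨⟨hF'mem, hF'max⟩, hEF'⟩
      obtain ⟨H, hF'H, hHfacet⟩ := exists_facet Γ hF'mem.1
      have hHF : H = F := hFuniq H ⟨hHfacet, hEF'.trans hF'H⟩
      exact (hF'max F ⟨hFfacet.1, hFnotS⟩ (hHF ▸ hF'H)).symm
    -- the collapse at E equals the simplicial deletion minus S and E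
    have hstep : collapseFace (Γ \ S) E = srDel Γ E \ (S ∪ {E}) := by
      ext G
      simp only [collapseFace, Set.mem_sep_iff, Set.mem_diff, Set.mem_union, srDel,
        Set.mem_setOf_eq, Set.mem_singleton_iff]
      constructor
      · rintro ⟨⟨hG, hGS⟩, hEG⟩
        exact ⟨⟨hG, fun h => hEG h.1⟩, fun h => h.elim hGS (fun h' => hEG (h' ▸ subset_rfl))⟩
      · rintro ⟨⟨hG, hns⟩, hGS⟩
        refine ⟨⟨hG, fun h => hGS (Or.inl h)⟩, fun hEG => ?_⟩
        rcases eq_or_ne G E with h | h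
        · exact hGS (Or.inr h)
        · exact hns (HasSubset.Subset.ssubset_of_ne hEG (Ne.symm h))
    -- invariants for the recursive call
    have hcomplex' : IsComplex (srDel Γ E) := isComplex_srDel hΓ E
    have hS' : ∀ X ∈ S ∪ {E}, X.card = d ∧ IsFacet (srDel Γ E) X := by
      rintro X (hX | hX)
      · refine ⟨(hS X hX).1, ⟨(hS X hX).2.1, ?_⟩, fun H hH hXH => (hS X hX).2.2 H hH.1 hXH⟩
        intro hss
        have h1 := Finset.card_lt_card hss
        have h2 := (hS X hX).1
        rw [hEd] at h1
        omega
      · rcases hX with rfl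
        refine ⟨hEd, ⟨hEΓ, fun hss => lt_irrefl _ hss⟩, fun H hH hEH => ?_⟩
        by_contra hne
        exact hH.2 (HasSubset.Subset.ssubset_of_ne hEH (Ne.symm hne))
    obtain ⟨hfseq, hend⟩ := ih (srDel Γ E) (S ∪ {E}) hcomplex' hord' hS'
    refine ⟨⟨hfree, hstep ▸ hfseq⟩, ?_⟩
    show collapseList (collapseFace (Γ \ S) E) M = _
    rw [hstep, hend]
    congr 1
    ext X
    simp only [Set.mem_union, Set.mem_singleton_iff, Set.mem_setOf_eq, List.mem_cons]
    tauto

lemma fwd {d : ℕ} {Γ : Set (Finset (Fin n))} (hΓ : IsComplex Γ)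
    {M : List (Finset (Fin n))} (hM : IsSimpOrder d Γ M) : Collapsible d Γ := by
  have hcards := simpOrder_card M Γ hM
  obtain ⟨hfree, hend⟩ := simpOrder_freeSeq M Γ ∅ hΓ hM (by simp)
  rw [Set.diff_empty] at hfree hend
  set Δ := fullSkel n d \ (∅ ∪ {E | E ∈ M}) with hΔ
  obtain ⟨L₂, hL₂free, hL₂card, hL₂end⟩ := peelTop d Δ.ncard Δ Δ le_rfl subset_rfl
    (fun G hG => hG.1) (fun G hG H hH _ => hH)
  refine ⟨M ++ L₂, freeSeq_append hfree (hend ▸ hL₂free), ?_, ?_⟩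
  · intro E hE
    rcases List.mem_append.mp hE with h | h
    · exact le_of_eq (hcards E h)
    · exact hL₂card E h
  · rw [collapseList_append, hend, hL₂end]
    simp
end ChordalAux

namespace ChordalAux
open ChordalPaper
variable {n : ℕ}

lemma collapse_package {d : ℕ} :
    ∀ (L : List (Finset (Fin n))) (Δ : Set (Finset (Fin n))),
      IsFreeSeq Δ L → (∀ E ∈ L, E.card ≤ d) → collapseList Δ L = ∅ →
      (∃ B ∈ Δ, d < B.card) →
      ∃ E₀ F₀ : Finset (Fin n), E₀.card ≤ d ∧ F₀ ∈ Δ ∧ d < F₀.card ∧ E₀ ⊆ F₀ ∧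
        (∀ G ∈ Δ, d < G.card → E₀ ⊆ G → G ⊆ F₀) ∧
        Collapsible d {G ∈ Δ | ¬(d < G.card ∧ E₀ ⊆ G)} := by
  intro L
  induction L with
  | nil =>
    intro Δ _ _ hnil hbig
    obtain ⟨B, hB, _⟩ := hbig
    rw [show collapseList Δ [] = Δ from rfl] at hnil
    exact absurd (hnil ▸ hB) (Set.notMem_empty B)
  | cons E M ih =>
    intro Δ hfree hcards hnil hbig
    obtain ⟨⟨hEΔ, F, ⟨hFfacet, hEF⟩, huniq⟩, htail⟩ := hfree
    have hEd : E.card ≤ d := hcards E (List.mem_cons_self)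
    have hMcards : ∀ X ∈ M, X.card ≤ d := fun X hX => hcards X (List.mem_cons_of_mem E hX)
    have hnil' : collapseList (collapseFace Δ E) M = ∅ := hnil
    by_cases hc : ∃ G ∈ Δ, d < G.card ∧ E ⊆ G
    · -- the first collapse removing a big face
      obtain ⟨B, hBΔ, hBbig, hEB⟩ := hc
      have hpack : ∀ G ∈ Δ, E ⊆ G → G ⊆ F := by
        intro G hG hEG
        obtain ⟨H, hGH, hH⟩ := exists_facet Δ hG
        have : H = F := huniq H ⟨hH, hEG.trans hGH⟩
        exact this ▸ hGH
      have hFbig : d < F.card := lt_of_lt_of_le hBbig (Finset.card_le_card (hpack B hBΔ hEB))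
      set Δ'' : Set (Finset (Fin n)) := {G ∈ Δ | ¬(d < G.card ∧ E ⊆ G)} with hΔ''
      set U : Set (Finset (Fin n)) := {G ∈ Δ'' | E ⊆ G} with hU
      obtain ⟨L', hL'free, hL'card, hL'end⟩ := peelTop d U.ncard Δ'' U le_rfl
        (fun G hG => hG.1)
        (fun G hG => by
          rcases hG with ⟨⟨_, hGn⟩, hEG⟩
          by_contra h
          exact hGn ⟨by_contra fun h' => h (by omega), hEG⟩)
        (fun G hG H hH hGH => ⟨hH, hG.2.trans hGH⟩)
      have hL'end' : collapseList Δ'' L' = collapseFace Δ E := by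
        rw [hL'end]
        ext G
        simp only [hΔ'', hU, Set.mem_diff, Set.mem_sep_iff, collapseFace]
        constructor
        · rintro ⟨⟨hG, hn⟩, hn2⟩
          exact ⟨hG, fun hEG => hn2 ⟨⟨hG, hn⟩, hEG⟩⟩
        · rintro ⟨hG, hEG⟩
          exact ⟨⟨hG, fun h => hEG h.2⟩, fun h => hEG h.2⟩
      refine ⟨E, F, hEd, hFfacet.1, hFbig, hEF, fun G hG hGb hEG => hpack G hG hEG,
        L' ++ M, freeSeq_append hL'free (hL'end' ▸ htail), ?_, ?_⟩
      · intro X hX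
        rcases List.mem_append.mp hX with h | h
        · exact hL'card X h
        · exact hMcards X h
      · rw [collapseList_append, hL'end']
        exact hnil'
    · -- the first collapse removes no big face
      push_neg at hc
      set Δ₁ := collapseFace Δ E with hΔ₁
      have hbig1 : ∃ B ∈ Δ₁, d < B.card := by
        obtain ⟨B, hBΔ, hBbig⟩ := hbig
        exact ⟨B, ⟨hBΔ, fun hEB => absurd hBbig (not_lt.mpr (le_of_not_gt (fun h => absurd (hc B hBΔ h) (fun hn => hn hEB))))⟩, hBbig⟩
      obtain ⟨E₀, F₀, hE₀d, hF₀Δ₁, hF₀big, hE₀F₀, hpack₁, hcol₁⟩ :=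
        ih Δ₁ htail hMcards hnil' hbig1
      have hF : ¬ d < F.card := fun h => (hc F hFfacet.1 h) hEF
      have hFsmall : F.card ≤ d := le_of_not_gt hF
      refine ⟨E₀, F₀, hE₀d, hF₀Δ₁.1, hF₀big, hE₀F₀, ?_, ?_⟩
      · intro G hG hGbig hE₀G
        have hGΔ₁ : G ∈ Δ₁ := ⟨hG, fun hEG => (hc G hG hGbig) hEG⟩
        exact hpack₁ G hGΔ₁ hGbig hE₀G
      · -- Collapsible Δ'' via E followed by the list for Δ₁''
        obtain ⟨L₁, hL₁free, hL₁card, hL₁end⟩ := hcol₁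
        have hEmem : E ∈ ({G ∈ Δ | ¬(d < G.card ∧ E₀ ⊆ G)} : Set _) :=
          ⟨hEΔ, fun h => by omega⟩
        have hFsm : F ∈ ({G ∈ Δ | ¬(d < G.card ∧ E₀ ⊆ G)} : Set _) :=
          ⟨hFfacet.1, fun h => by omega⟩
        have hFfacet'' : IsFacet {G ∈ Δ | ¬(d < G.card ∧ E₀ ⊆ G)} F :=
          ⟨hFsm, fun H hH hFH => hFfacet.2 H hH.1 hFH⟩
        have hfreeE : IsFreeFace {G ∈ Δ | ¬(d < G.card ∧ E₀ ⊆ G)} E := by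
          refine ⟨hEmem, F, ⟨hFfacet'', hEF⟩, ?_⟩
          rintro F' ⟨⟨hF'mem, hF'max⟩, hEF'⟩
          obtain ⟨H, hF'H, hHfacet⟩ := exists_facet Δ hF'mem.1
          have hHF : H = F := huniq H ⟨hHfacet, hEF'.trans hF'H⟩
          exact (hF'max F hFsm (hHF ▸ hF'H)).symm
        have hstep : collapseFace {G ∈ Δ | ¬(d < G.card ∧ E₀ ⊆ G)} E
            = {G ∈ Δ₁ | ¬(d < G.card ∧ E₀ ⊆ G)} := by
          ext G
          simp only [collapseFace, Set.mem_sep_iff, hΔ₁, Set.mem_setOf_eq]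
          tauto
        refine ⟨E :: L₁, ⟨hfreeE, ?_⟩, ?_, ?_⟩
        · rw [hstep]; exact hL₁free
        · intro X hX
          rcases List.mem_cons.mp hX with h | h
          · exact h ▸ hEd
          · exact hL₁card X h
        · show collapseList (collapseFace _ E) L₁ = ∅
          rw [hstep]; exact hL₁end

lemma dclosure_remove {d : ℕ} {Γ : Set (Finset (Fin n))} (hclo : Γ = dClosure d Γ)
    {E₀ : Finset (Fin n)} (hE₀ : E₀.card ≤ d) :
    ({G ∈ Γ | ¬(d < G.card ∧ E₀ ⊆ G)} : Set _)
      = dClosure d {G ∈ Γ | ¬(d < G.card ∧ E₀ ⊆ G)} := by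
  have hΓ : IsComplex Γ := isComplex_of_closure hclo
  ext G
  constructor
  · rintro ⟨hG, hn⟩
    by_cases hGc : G.card ≤ d
    · exact Or.inl hGc
    · refine Or.inr fun H hH hHc => ⟨hΓ G hG H hH, ?_⟩
      rintro ⟨_, hE₀H⟩
      exact hn ⟨by omega, hE₀H.trans hH⟩
  · rintro (hGc | h)
    · exact ⟨skel_mem hclo hGc, fun hx => by omega⟩
    · by_cases hGc : G.card ≤ d
      · exact ⟨skel_mem hclo hGc, fun hx => by omega⟩
      · have hGΓ : G ∈ Γ := by
          rw [hclo]
          exact Or.inr fun H hH hHc => (h H hH hHc).1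
        refine ⟨hGΓ, ?_⟩
        rintro ⟨hGbig, hE₀G⟩
        obtain ⟨H, hE₀H, hHG, hHc⟩ :=
          Finset.exists_subsuperset_card_eq hE₀G (le_trans hE₀ (Nat.le_succ d)) (by omega)
        exact (h H hHG hHc).2 ⟨by omega, hE₀H⟩

lemma peel {d : ℕ} :
    ∀ (k : ℕ) (Γ : Set (Finset (Fin n))) (E₀ F₀ : Finset (Fin n)),
      Γ = dClosure d Γ → E₀.card ≤ d → E₀ ⊆ F₀ → (F₀ \ E₀).card = k →
      ({G ∈ Γ | d < G.card ∧ E₀ ⊆ G} = {G | E₀ ⊆ G ∧ G ⊆ F₀ ∧ d < G.card}) →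
      ∃ L, Steps d Γ L ∧ srDelList Γ L = {G ∈ Γ | ¬(d < G.card ∧ E₀ ⊆ G)} := by
  intro k
  induction k with
  | zero =>
    intro Γ E₀ F₀ hclo hE₀ hsub hk hfull
    -- F₀ = E₀, so no big faces contain E₀
    have hF₀E₀ : F₀ = E₀ := by
      have : F₀ \ E₀ = ∅ := Finset.card_eq_zero.mp hk
      have h2 : F₀ ⊆ E₀ := by
        intro x hx
        by_contra hxE
        exact absurd (Finset.mem_sdiff.mpr ⟨hx, hxE⟩) (this ▸ Finset.notMem_empty x)
      exact Finset.Subset.antisymm h2 hsub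
    refine ⟨[], trivial, ?_⟩
    show Γ = _
    ext G
    constructor
    · intro hG
      refine ⟨hG, ?_⟩
      rintro ⟨hGbig, hE₀G⟩
      have : G ∈ {G | E₀ ⊆ G ∧ G ⊆ F₀ ∧ d < G.card} := (Set.ext_iff.mp hfull G).mp ⟨hG, hGbig, hE₀G⟩
      have hc := Finset.card_le_card this.2.1
      rw [hF₀E₀] at hc
      omega
    · exact fun h => h.1
  | succ k ih =>
    intro Γ E₀ F₀ hclo hE₀ hsub hk hfull
    by_cases hF₀ : F₀.card ≤ d
    · -- no big faces contain E₀ at all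
      refine ⟨[], trivial, ?_⟩
      show Γ = _
      ext G
      constructor
      · intro hG
        refine ⟨hG, ?_⟩
        rintro ⟨hGbig, hE₀G⟩
        have : G ∈ {G | E₀ ⊆ G ∧ G ⊆ F₀ ∧ d < G.card} := (Set.ext_iff.mp hfull G).mp ⟨hG, hGbig, hE₀G⟩
        have hc := Finset.card_le_card this.2.1
        omega
      · exact fun h => h.1
    · push_neg at hF₀
      have hF₀Γ : F₀ ∈ Γ := by
        have : F₀ ∈ {G | E₀ ⊆ G ∧ G ⊆ F₀ ∧ d < G.card} := ⟨hsub, subset_rfl, hF₀⟩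
        exact ((Set.ext_iff.mp hfull F₀).mpr this).1
      by_cases hE₀d : E₀.card = d
      · -- single simplicial deletion at E₀
        have hE₀Γ : E₀ ∈ Γ := skel_mem hclo hE₀
        have hE₀ne : E₀ ≠ F₀ := fun h => by rw [h] at hE₀d; omega
        have hmaxF₀ : IsFacet Γ F₀ := by
          refine ⟨hF₀Γ, fun H hH hFH => ?_⟩
          have hHbig : d < H.card := lt_of_lt_of_le hF₀ (Finset.card_le_card hFH)
          have : H ∈ {G | E₀ ⊆ G ∧ G ⊆ F₀ ∧ d < G.card} :=
            (Set.ext_iff.mp hfull H).mp ⟨hH, hHbig, hsub.trans hFH⟩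
          exact Finset.Subset.antisymm this.2.1 hFH
        have hfreeE₀ : IsFreeFace Γ E₀ := by
          refine ⟨hE₀Γ, F₀, ⟨hmaxF₀, hsub⟩, ?_⟩
          rintro F' ⟨⟨hF'Γ, hF'max⟩, hE₀F'⟩
          rcases eq_or_ne F' E₀ with h | h
          · exact absurd (hF'max F₀ hF₀Γ (h ▸ hsub)) (fun h2 => hE₀ne (h ▸ h2).symm)
          · have hF'big : d < F'.card := by
              have := Finset.card_lt_card (HasSubset.Subset.ssubset_of_ne hE₀F' (Ne.symm h))
              omega
            have : F' ∈ {G | E₀ ⊆ G ∧ G ⊆ F₀ ∧ d < G.card} :=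
              (Set.ext_iff.mp hfull F').mp ⟨hF'Γ, hF'big, hE₀F'⟩
            exact (hF'max F₀ hF₀Γ this.2.1).symm
        have hnotfacet : ¬ IsFacet Γ E₀ := by
          rintro ⟨_, hmax⟩
          exact hE₀ne (hmax F₀ hF₀Γ hsub).symm
        refine ⟨[E₀], ⟨hE₀d, hfreeE₀, hnotfacet, trivial⟩, ?_⟩
        show srDel Γ E₀ = _
        ext G
        simp only [srDel, Set.mem_sep_iff]
        constructor
        · rintro ⟨hG, hns⟩
          refine ⟨hG, ?_⟩
          rintro ⟨hGbig, hE₀G⟩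
          exact hns (HasSubset.Subset.ssubset_of_ne hE₀G (fun h => by rw [← h] at hGbig; omega))
        · rintro ⟨hG, hn⟩
          refine ⟨hG, fun hss => ?_⟩
          have := Finset.card_lt_card hss
          exact hn ⟨by omega, hss.subset⟩
      · -- |E₀| < d : split off one vertex x of F₀ \ E₀
        have hE₀lt : E₀.card < d := lt_of_le_of_ne hE₀ hE₀d
        have hkpos : (F₀ \ E₀).Nonempty := by
          rw [← Finset.card_pos, hk]; omega
        obtain ⟨x, hx⟩ := hkpos
        have hxF₀ : x ∈ F₀ := (Finset.mem_sdiff.mp hx).1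
        have hxE₀ : x ∉ E₀ := (Finset.mem_sdiff.mp hx).2
        set E₁ := insert x E₀ with hE₁
        have hE₁card : E₁.card = E₀.card + 1 := Finset.card_insert_of_notMem hxE₀
        have hE₁d : E₁.card ≤ d := by omega
        have hE₁F₀ : E₁ ⊆ F₀ := Finset.insert_subset hxF₀ hsub
        have hcardsd : F₀.card = E₀.card + (k+1) := by
          have := Finset.card_sdiff_of_subset hsub
          omega
        have hmeas1 : (F₀ \ E₁).card = k := by
          have h1 : E₁ ⊆ F₀ := hE₁F₀
          have := Finset.card_sdiff_of_subset h1
          omega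
        have hfull1 : ({G ∈ Γ | d < G.card ∧ E₁ ⊆ G} : Set _)
            = {G | E₁ ⊆ G ∧ G ⊆ F₀ ∧ d < G.card} := by
          ext G
          simp only [Set.mem_sep_iff, Set.mem_setOf_eq]
          constructor
          · rintro ⟨hG, hGbig, hE₁G⟩
            have hE₀G : E₀ ⊆ G := (Finset.subset_insert x E₀).trans hE₁G
            have : G ∈ {G | E₀ ⊆ G ∧ G ⊆ F₀ ∧ d < G.card} :=
              (Set.ext_iff.mp hfull G).mp ⟨hG, hGbig, hE₀G⟩
            exact ⟨hE₁G, this.2.1, hGbig⟩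
          · rintro ⟨hE₁G, hGF₀, hGbig⟩
            have hE₀G : E₀ ⊆ G := (Finset.subset_insert x E₀).trans hE₁G
            have : G ∈ {G ∈ Γ | d < G.card ∧ E₀ ⊆ G} :=
              (Set.ext_iff.mp hfull G).mpr ⟨hE₀G, hGF₀, hGbig⟩
            exact ⟨this.1, hGbig, hE₁G⟩
        obtain ⟨L₁, hL₁steps, hL₁end⟩ := ih Γ E₁ F₀ hclo hE₁d hE₁F₀ hmeas1 hfull1
        set Γ₁ : Set (Finset (Fin n)) := {G ∈ Γ | ¬(d < G.card ∧ E₁ ⊆ G)} with hΓ₁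
        have hclo₁ : Γ₁ = dClosure d Γ₁ := dclosure_remove hclo hE₁d
        have hE₀F₀x : E₀ ⊆ F₀.erase x := Finset.subset_erase.mpr ⟨hsub, hxE₀⟩
        have hmeas2 : ((F₀.erase x) \ E₀).card = k := by
          have h1 : (F₀.erase x).card = F₀.card - 1 := Finset.card_erase_of_mem hxF₀
          have := Finset.card_sdiff_of_subset hE₀F₀x
          have hxcard : E₀.card ≤ (F₀.erase x).card := by omega
          omega
        have hfull2 : ({G ∈ Γ₁ | d < G.card ∧ E₀ ⊆ G} : Set _)
            = {G | E₀ ⊆ G ∧ G ⊆ F₀.erase x ∧ d < G.card} := by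
          ext G
          simp only [hΓ₁, Set.mem_sep_iff, Set.mem_setOf_eq]
          constructor
          · rintro ⟨⟨hG, hn⟩, hGbig, hE₀G⟩
            have : G ∈ {G | E₀ ⊆ G ∧ G ⊆ F₀ ∧ d < G.card} :=
              (Set.ext_iff.mp hfull G).mp ⟨hG, hGbig, hE₀G⟩
            have hxG : x ∉ G := by
              intro hxG
              exact hn ⟨hGbig, Finset.insert_subset hxG hE₀G⟩
            exact ⟨hE₀G, Finset.subset_erase.mpr ⟨this.2.1, hxG⟩, hGbig⟩
          · rintro ⟨hE₀G, hGF₀x, hGbig⟩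
            have hGF₀ : G ⊆ F₀ := hGF₀x.trans (Finset.erase_subset x F₀)
            have hxG : x ∉ G := fun hxG => (Finset.mem_erase.mp (hGF₀x hxG)).1 rfl
            have hGΓ : G ∈ Γ :=
              ((Set.ext_iff.mp hfull G).mpr ⟨hE₀G, hGF₀, hGbig⟩).1
            refine ⟨⟨hGΓ, ?_⟩, hGbig, hE₀G⟩
            rintro ⟨_, hE₁G⟩
            exact hxG (hE₁G (Finset.mem_insert_self x E₀))
        obtain ⟨L₂, hL₂steps, hL₂end⟩ := ih Γ₁ E₀ (F₀.erase x) hclo₁ hE₀ hE₀F₀x hmeas2 hfull2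
        refine ⟨L₁ ++ L₂, steps_append' hL₁steps (by rw [hL₁end]; exact hL₂steps), ?_⟩
        rw [srDelList_append, hL₁end, hL₂end]
        ext G
        simp only [hΓ₁, Set.mem_sep_iff]
        constructor
        · rintro ⟨⟨hG, h1⟩, h2⟩
          exact ⟨hG, h2⟩
        · rintro ⟨hG, hn⟩
          have h1 : ¬(d < G.card ∧ E₁ ⊆ G) := by
            rintro ⟨hGbig, hE₁G⟩
            exact hn ⟨hGbig, (Finset.subset_insert x E₀).trans hE₁G⟩
          exact ⟨⟨hG, h1⟩, hn⟩
end ChordalAux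

namespace ChordalAux
open ChordalPaper
variable {n : ℕ}

lemma back {d : ℕ} :
    ∀ (N : ℕ) (Γ : Set (Finset (Fin n))), Γ.ncard ≤ N →
      Γ = dClosure d Γ → Collapsible d Γ → ∃ L, IsSimpOrder d Γ L := by
  intro N
  induction N with
  | zero =>
    intro Γ hN hclo _
    exfalso
    have hemp : (∅ : Finset (Fin n)) ∈ Γ := skel_mem hclo (by simp)
    have : Γ.ncard = 0 := Nat.le_zero.mp hN
    rw [Set.ncard_eq_zero (Set.toFinite Γ)] at this
    exact absurd (this ▸ hemp) (Set.notMem_empty _)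
  | succ N ih =>
    intro Γ hN hclo hcol
    by_cases hbig : ∃ B ∈ Γ, d < B.card
    · obtain ⟨L, hLfree, hLcard, hLnil⟩ := hcol
      obtain ⟨E₀, F₀, hE₀d, hF₀Γ, hF₀big, hE₀F₀, hpack, hcol''⟩ :=
        collapse_package L Γ hLfree hLcard hLnil hbig
      have hΓcomplex : IsComplex Γ := isComplex_of_closure hclo
      have hfull : ({G ∈ Γ | d < G.card ∧ E₀ ⊆ G} : Set _)
          = {G | E₀ ⊆ G ∧ G ⊆ F₀ ∧ d < G.card} := by
        ext G
        simp only [Set.mem_sep_iff, Set.mem_setOf_eq]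
        constructor
        · rintro ⟨hG, hGbig, hE₀G⟩
          exact ⟨hE₀G, hpack G hG hGbig hE₀G, hGbig⟩
        · rintro ⟨hE₀G, hGF₀, hGbig⟩
          exact ⟨hΓcomplex F₀ hF₀Γ G hGF₀, hGbig, hE₀G⟩
      obtain ⟨L₁, hL₁steps, hL₁end⟩ := peel (F₀ \ E₀).card Γ E₀ F₀ hclo hE₀d hE₀F₀ rfl hfull
      set Γ'' : Set (Finset (Fin n)) := {G ∈ Γ | ¬(d < G.card ∧ E₀ ⊆ G)} with hΓ''
      have hclo'' : Γ'' = dClosure d Γ'' := dclosure_remove hclo hE₀d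
      have hss : Γ'' ⊂ Γ := by
        constructor
        · exact fun G hG => hG.1
        · intro hsub
          exact (hsub hF₀Γ).2 ⟨hF₀big, hE₀F₀⟩
      have hncard : Γ''.ncard ≤ N := by
        have := Set.ncard_lt_ncard hss (Set.toFinite Γ)
        omega
      obtain ⟨L₂, hL₂⟩ := ih Γ'' hncard hclo'' hcol''
      exact ⟨L₁ ++ L₂, steps_append hL₁steps (by rw [hL₁end]; exact hL₂)⟩
    · push_neg at hbig
      refine ⟨[], ?_⟩
      show Γ = fullSkel n d
      ext G
      constructor
      · exact fun hG => le_of_not_gt (fun h => absurd h (not_lt.mpr (hbig G hG)))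
      · exact fun hG => skel_mem hclo hG
end ChordalAux




open ChordalPaper in
/-- a `d`-closure is `d`-chordal iff it is `d`-collapsible. -/
theorem stmt4 (n d : ℕ) (hd : 1 ≤ d) (Γ : Set (Finset (Fin n))) (hΓ : IsComplex Γ)
    (hclo : Γ = dClosure d Γ) :
    DChordal d Γ ↔ Collapsible d Γ := by

  constructor
  · rintro ⟨M, hM⟩
    rw [← hclo] at hM
    exact ChordalAux.fwd hΓ hM
  · intro hcol
    obtain ⟨L, hL⟩ := ChordalAux.back Γ.ncard Γ le_rfl hclo hcol
    exact ⟨L, hclo ▸ hL⟩
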